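/- Let q ≥ 3 be an integer and θ = 1 − 1/q. The function ω_max on [0,θ] defined by ω_max(δ) = 2θ(1 − √(1 − δ/θ)) for δ ∈ [0, (2q−3)/(q(q−1))] and ω_max(δ) = 1 − (1 − δ/θ)·(q−1)²/(q(q−2)) for δ ∈ [(2q−3)/(q(q−1)), θ] is strictly increasing on [0,θ], continuously differentiable on (0,θ), and convex on [0,θ]. -/

import Mathlib

open Filter Real Set

/-- The function `ω_max` (with `θ = 1 - 1/q`). -/
noncomputable def omegaMax (q : ℕ) (δ : ℝ) : ℝ :=
  if δ ≤ (2 * (q : ℝ) - 3) / ((q : ℝ) * ((q : ℝ) - 1)) then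
    2 * (1 - 1 / (q : ℝ)) * (1 - Real.sqrt (1 - δ / (1 - 1 / (q : ℝ))))
  else
    1 - (1 - δ / (1 - 1 / (q : ℝ))) * ((q : ℝ) - 1) ^ 2 / ((q : ℝ) * ((q : ℝ) - 2))

/- Auxiliary pieces of `omegaMax`, for a real parameter `Q`. -/
noncomputable def omF (Q δ : ℝ) : ℝ :=
  2 * (1 - 1 / Q) * (1 - Real.sqrt (1 - δ / (1 - 1 / Q)))

noncomputable def omG (Q δ : ℝ) : ℝ :=
  1 - (1 - δ / (1 - 1 / Q)) * (Q - 1) ^ 2 / (Q * (Q - 2))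

noncomputable def om (Q δ : ℝ) : ℝ :=
  if δ ≤ (2 * Q - 3) / (Q * (Q - 1)) then omF Q δ else omG Q δ

lemma omegaMax_eq_om (q : ℕ) : omegaMax q = om (q : ℝ) := rfl

section Aux

variable {Q : ℝ} (hQ : 3 ≤ Q)

lemma theta_pos (hQ : 3 ≤ Q) : 0 < 1 - 1 / Q := by
  have h0 : (0:ℝ) < Q := by linarith
  have : 1 / Q < 1 := by rw [div_lt_one h0]; linarith
  linarith

lemma s_lt_theta (hQ : 3 ≤ Q) : (2 * Q - 3) / (Q * (Q - 1)) < 1 - 1 / Q := by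
  have h0 : (0:ℝ) < Q := by linarith
  have h1 : (0:ℝ) < Q - 1 := by linarith
  rw [div_lt_iff₀ (by positivity)]
  have h : (1 - 1 / Q) * (Q * (Q - 1)) = (Q - 1) ^ 2 := by field_simp
  rw [h]
  nlinarith [sq_nonneg (Q - 2)]

lemma key_eq (hQ : 3 ≤ Q) :
    1 - ((2 * Q - 3) / (Q * (Q - 1))) / (1 - 1 / Q) = ((Q - 2) / (Q - 1)) ^ 2 := by
  have h0 : Q ≠ 0 := by intro h; rw [h] at hQ; norm_num at hQ
  have h1 : Q - 1 ≠ 0 := by intro h; nlinarith [hQ]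
  field_simp
  ring

lemma sqrt_key (hQ : 3 ≤ Q) :
    Real.sqrt (1 - ((2 * Q - 3) / (Q * (Q - 1))) / (1 - 1 / Q)) = (Q - 2) / (Q - 1) := by
  rw [key_eq hQ]
  exact Real.sqrt_sq (div_nonneg (by linarith) (by linarith))

lemma one_sub_div_pos (hQ : 3 ≤ Q) {δ : ℝ} (hδ : δ < 1 - 1 / Q) :
    0 < 1 - δ / (1 - 1 / Q) := by
  have hθ := theta_pos hQ
  have := (div_lt_one hθ).mpr hδ
  linarith

lemma omF_hasDeriv (hQ : 3 ≤ Q) {δ : ℝ} (hδ : δ < 1 - 1 / Q) :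
    HasDerivAt (omF Q) ((Real.sqrt (1 - δ / (1 - 1 / Q)))⁻¹) δ := by
  have hθ := theta_pos hQ
  have hu : 0 < 1 - δ / (1 - 1 / Q) := one_sub_div_pos hQ hδ
  have hs : 0 < Real.sqrt (1 - δ / (1 - 1 / Q)) := Real.sqrt_pos.mpr hu
  have h1 : HasDerivAt (fun x : ℝ => 1 - x / (1 - 1 / Q)) (-(1 / (1 - 1 / Q))) δ := by
    simpa using ((hasDerivAt_id δ).div_const (1 - 1 / Q)).const_sub 1
  have h2 := (Real.hasDerivAt_sqrt hu.ne').comp δ h1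
  have h3 := (h2.const_sub 1).const_mul (2 * (1 - 1 / Q))
  refine h3.congr_deriv (Eq.symm ?_)
  set a := Real.sqrt (1 - δ / (1 - 1 / Q)) with ha
  set t : ℝ := 1 - 1 / Q with ht
  field_simp

lemma omG_hasDeriv (hQ : 3 ≤ Q) (δ : ℝ) :
    HasDerivAt (omG Q) ((Q - 1) / (Q - 2)) δ := by
  have hθ := theta_pos hQ
  have h0 : Q ≠ 0 := by intro h; rw [h] at hQ; norm_num at hQ
  have h2 : Q - 2 ≠ 0 := by intro h; nlinarith
  have h1 : HasDerivAt (fun x : ℝ => 1 - x / (1 - 1 / Q)) (-(1 / (1 - 1 / Q))) δ := by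
    simpa using ((hasDerivAt_id δ).div_const (1 - 1 / Q)).const_sub 1
  have h3 := (((h1.mul_const ((Q - 1) ^ 2)).div_const (Q * (Q - 2))).const_sub 1)
  refine h3.congr_deriv (Eq.symm ?_)
  have h1 : Q - 1 ≠ 0 := by intro h; nlinarith
  field_simp

lemma omFG_eq (hQ : 3 ≤ Q) :
    omF Q ((2 * Q - 3) / (Q * (Q - 1))) = omG Q ((2 * Q - 3) / (Q * (Q - 1))) := by
  have h0 : Q ≠ 0 := by intro h; rw [h] at hQ; norm_num at hQ
  have h1 : Q - 1 ≠ 0 := by intro h; nlinarith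
  have h2 : Q - 2 ≠ 0 := by intro h; nlinarith
  unfold omF omG
  rw [sqrt_key hQ, key_eq hQ]
  field_simp
  ring

lemma sqrt_ge (hQ : 3 ≤ Q) {δ : ℝ} (hδ : δ ≤ (2 * Q - 3) / (Q * (Q - 1))) :
    (Q - 2) / (Q - 1) ≤ Real.sqrt (1 - δ / (1 - 1 / Q)) := by
  rw [← sqrt_key hQ]
  apply Real.sqrt_le_sqrt
  have hθ := theta_pos hQ
  gcongr

lemma sqrt_le (hQ : 3 ≤ Q) {δ : ℝ} (hδ : (2 * Q - 3) / (Q * (Q - 1)) ≤ δ) :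
    Real.sqrt (1 - δ / (1 - 1 / Q)) ≤ (Q - 2) / (Q - 1) := by
  rw [← sqrt_key hQ]
  apply Real.sqrt_le_sqrt
  have hθ := theta_pos hQ
  gcongr

lemma om_hasDeriv_at_s (hQ : 3 ≤ Q) :
    HasDerivAt (om Q) ((Q - 1) / (Q - 2)) ((2 * Q - 3) / (Q * (Q - 1))) := by
  have hsθ : (2 * Q - 3) / (Q * (Q - 1)) < 1 - 1 / Q := s_lt_theta hQ
  have hd1 : HasDerivWithinAt (om Q) ((Q - 1) / (Q - 2))
      (Iic ((2 * Q - 3) / (Q * (Q - 1)))) ((2 * Q - 3) / (Q * (Q - 1))) := by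
    have hF := (omF_hasDeriv hQ hsθ).hasDerivWithinAt
      (s := Iic ((2 * Q - 3) / (Q * (Q - 1))))
    rw [sqrt_key hQ, inv_div] at hF
    exact hF.congr (fun x hx => by simp only [om]; rw [if_pos (mem_Iic.mp hx)])
      (by simp only [om]; rw [if_pos le_rfl])
  have hd2 : HasDerivWithinAt (om Q) ((Q - 1) / (Q - 2))
      (Ici ((2 * Q - 3) / (Q * (Q - 1)))) ((2 * Q - 3) / (Q * (Q - 1))) := by
    refine ((omG_hasDeriv hQ _).hasDerivWithinAt
      (s := Ici ((2 * Q - 3) / (Q * (Q - 1))))).congr (fun x hx => ?_) ?_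
    · by_cases hxs : x ≤ (2 * Q - 3) / (Q * (Q - 1))
      · have hxd : x = (2 * Q - 3) / (Q * (Q - 1)) := le_antisymm hxs hx
        subst hxd
        simp only [om]; rw [if_pos le_rfl]; exact omFG_eq hQ
      · simp only [om]; rw [if_neg hxs]
    · simp only [om]; rw [if_pos le_rfl]; exact omFG_eq hQ
  have hu := hd1.union hd2
  rwa [Iic_union_Ici, hasDerivWithinAt_univ] at hu

lemma om_hasDeriv (hQ : 3 ≤ Q) {δ : ℝ} (hδ : δ < 1 - 1 / Q) :
    HasDerivAt (om Q)
      (min (Real.sqrt (1 - δ / (1 - 1 / Q)))⁻¹ ((Q - 1) / (Q - 2))) δ := by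
  have hQ1 : (0:ℝ) < Q - 1 := by linarith
  have hQ2 : (0:ℝ) < Q - 2 := by linarith
  rcases lt_trichotomy δ ((2 * Q - 3) / (Q * (Q - 1))) with h | h | h
  · have heq : om Q =ᶠ[nhds δ] omF Q :=
      Filter.eventuallyEq_of_mem (Iio_mem_nhds h)
        (fun x hx => by simp only [om]; rw [if_pos (le_of_lt hx)])
    have hd := (omF_hasDeriv hQ hδ).congr_of_eventuallyEq heq
    refine hd.congr_deriv (Eq.symm ?_)
    refine min_eq_left ?_
    rw [show (Q - 1) / (Q - 2) = ((Q - 2) / (Q - 1))⁻¹ by rw [inv_div]]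
    exact inv_anti₀ (div_pos hQ2 hQ1) (sqrt_ge hQ h.le)
  · rw [h, sqrt_key hQ, inv_div, min_self]
    exact om_hasDeriv_at_s hQ
  · have heq : om Q =ᶠ[nhds δ] omG Q :=
      Filter.eventuallyEq_of_mem (Ioi_mem_nhds h)
        (fun x hx => by simp only [om]; rw [if_neg (not_le.mpr hx)])
    have hd := (omG_hasDeriv hQ δ).congr_of_eventuallyEq heq
    refine hd.congr_deriv (Eq.symm ?_)
    refine min_eq_right ?_
    rw [show (Q - 1) / (Q - 2) = ((Q - 2) / (Q - 1))⁻¹ by rw [inv_div]]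
    exact inv_anti₀ (Real.sqrt_pos.mpr (one_sub_div_pos hQ hδ)) (sqrt_le hQ h.le)

end Aux

theorem stmt14 (q : ℕ) (hq : 3 ≤ q) :
    StrictMonoOn (omegaMax q) (Set.Icc (0 : ℝ) (1 - 1 / (q : ℝ))) ∧
    ContDiffOn ℝ 1 (omegaMax q) (Set.Ioo (0 : ℝ) (1 - 1 / (q : ℝ))) ∧
    ConvexOn ℝ (Set.Icc (0 : ℝ) (1 - 1 / (q : ℝ))) (omegaMax q) := by
  have hQ : (3:ℝ) ≤ (q:ℝ) := by exact_mod_cast hq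
  rw [omegaMax_eq_om]
  have hθ := theta_pos hQ
  have hQ1 : (0:ℝ) < (q:ℝ) - 1 := by linarith
  have hQ2 : (0:ℝ) < (q:ℝ) - 2 := by linarith
  have hcont : Continuous (om (q:ℝ)) := by
    unfold om
    refine Continuous.if_le ?_ ?_ continuous_id continuous_const ?_
    · unfold omF; fun_prop
    · unfold omG; fun_prop
    · intro x hx; rw [hx]; exact omFG_eq hQ
  have hderiv : ∀ x ∈ Ioo (0:ℝ) (1 - 1/(q:ℝ)), deriv (om (q:ℝ)) x
      = min (Real.sqrt (1 - x/(1 - 1/(q:ℝ))))⁻¹ (((q:ℝ)-1)/((q:ℝ)-2)) :=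
    fun x hx => (om_hasDeriv hQ hx.2).deriv
  have hdpos : ∀ x ∈ Ioo (0:ℝ) (1-1/(q:ℝ)), 0 < deriv (om (q:ℝ)) x := by
    intro x hx
    rw [hderiv x hx]
    exact lt_min (inv_pos.mpr (Real.sqrt_pos.mpr (one_sub_div_pos hQ hx.2)))
      (div_pos hQ1 hQ2)
  have hmono : MonotoneOn (deriv (om (q:ℝ))) (Ioo (0:ℝ) (1-1/(q:ℝ))) := by
    intro x hx y hy hxy
    rw [hderiv x hx, hderiv y hy]
    refine min_le_min (inv_anti₀
      (Real.sqrt_pos.mpr (one_sub_div_pos hQ hy.2)) (Real.sqrt_le_sqrt ?_)) le_rfl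
    gcongr
  have hdiff : DifferentiableOn ℝ (om (q:ℝ)) (Ioo (0:ℝ) (1-1/(q:ℝ))) :=
    fun x hx => (om_hasDeriv hQ hx.2).differentiableAt.differentiableWithinAt
  have hDcont : ContinuousOn
      (fun x : ℝ => min (Real.sqrt (1 - x/(1 - 1/(q:ℝ))))⁻¹ (((q:ℝ)-1)/((q:ℝ)-2)))
      (Ioo (0:ℝ) (1-1/(q:ℝ))) := by
    have hinv : ContinuousOn (fun x : ℝ => (Real.sqrt (1 - x/(1 - 1/(q:ℝ))))⁻¹)
        (Ioo (0:ℝ) (1-1/(q:ℝ))) := by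
      refine ContinuousOn.inv₀ (Continuous.continuousOn (by fun_prop)) ?_
      exact fun x hx => (Real.sqrt_pos.mpr (one_sub_div_pos hQ hx.2)).ne'
    exact fun x hx => (hinv x hx).min continuousWithinAt_const
  refine ⟨?_, ?_, ?_⟩
  · exact strictMonoOn_of_deriv_pos (convex_Icc _ _) hcont.continuousOn
      (by rw [interior_Icc]; exact hdpos)
  · rw [← zero_add (1 : WithTop ℕ∞), contDiffOn_succ_iff_deriv_of_isOpen isOpen_Ioo]
    refine ⟨hdiff, by simp, ?_⟩
    rw [contDiffOn_zero]
    exact hDcont.congr hderiv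
  · exact MonotoneOn.convexOn_of_deriv (convex_Icc _ _) hcont.continuousOn
      (by rw [interior_Icc]; exact hdiff) (by rw [interior_Icc]; exact hmono)
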